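/- Let n ≥ 2 and let W be the Coxeter group of affine type Ã_n, i.e. the Coxeter group with generators s₀, s₁, …, s_n and Coxeter matrix M given by M(i,i) = 1, M(i,j) = 3 if i and j are adjacent in the (n+1)-cycle (j ≡ i ± 1 mod n+1), and M(i,j) = 2 otherwise. Then for every k ∈ ℕ, the element (s₀s₁⋯s_n)^k has length k(n+1); in particular every prefix of the infinite word s₀s₁⋯s_n s₀s₁⋯s_n ⋯ is a reduced word. -/

import Mathlib

open Fin.NatCast

namespace AffineAAux

open List Equiv Function

theorem emod_helper {N x e : ℤ} (q : ℤ) (h : x = N * q + e) (h0 : 0 ≤ e) (h1 : e < N) :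
    x % N = e := by
  subst h
  rw [add_comm, Int.add_mul_emod_self_left, Int.emod_eq_of_lt h0 h1]

theorem emod_extract (N x : ℤ) : ∃ q, x = N * q + x % N :=
  ⟨x / N, (Int.mul_ediv_add_emod x N).symm⟩

/-- Basic piecewise map: add 1 on residue class `e1`, subtract 1 on residue class `e2`. -/
def fA (N e1 e2 x : ℤ) : ℤ :=
  if x % N = e1 then x + 1 else if x % N = e2 then x - 1 else x

theorem fA_eval_up {N e1 e2 x : ℤ} (hx : x % N = e1) : fA N e1 e2 x = x + 1 := by
  rw [fA, if_pos hx]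

theorem fA_eval_down {N e1 e2 x : ℤ} (hx : x % N = e2) (hne : e2 ≠ e1) :
    fA N e1 e2 x = x - 1 := by
  rw [fA, if_neg (by rw [hx]; exact hne), if_pos hx]

theorem fA_eval_other {N e1 e2 x r : ℤ} (hx : x % N = r) (h1 : r ≠ e1) (h2 : r ≠ e2) :
    fA N e1 e2 x = x := by
  rw [fA, if_neg (by rw [hx]; exact h1), if_neg (by rw [hx]; exact h2)]

theorem fA_move (N e1 e2 x : ℤ) :
    fA N e1 e2 x = x + 1 ∨ fA N e1 e2 x = x - 1 ∨ fA N e1 e2 x = x := by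
  unfold fA; split_ifs <;> tauto

structure Pair (N e1 e2 : ℤ) : Prop where
  up : ∀ x : ℤ, x % N = e1 → (x + 1) % N = e2
  down : ∀ x : ℤ, x % N = e2 → (x - 1) % N = e1
  ne : e1 ≠ e2

theorem fA_invol {N e1 e2 : ℤ} (h : Pair N e1 e2) : Involutive (fA N e1 e2) := by
  intro x
  by_cases hx1 : x % N = e1
  · rw [fA_eval_up hx1, fA_eval_down (h.up x hx1) (Ne.symm h.ne)]; ring
  · by_cases hx2 : x % N = e2
    · rw [fA_eval_down hx2 (Ne.symm h.ne), fA_eval_up (h.down x hx2)]; ring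
    · rw [fA_eval_other rfl hx1 hx2, fA_eval_other rfl hx1 hx2]

/-- The permutation of `ℤ` induced by `fA`. -/
def pA {N e1 e2 : ℤ} (h : Pair N e1 e2) : Equiv.Perm ℤ := (fA_invol h).toPerm

@[simp] theorem pA_apply {N e1 e2 : ℤ} (h : Pair N e1 e2) (x : ℤ) :
    pA h x = fA N e1 e2 x := rfl

theorem pA_sq {N e1 e2 : ℤ} (h : Pair N e1 e2) : pA h * pA h = 1 := by
  ext x
  simp [pA_apply, Perm.mul_apply, fA_invol h x]

theorem pA_inv {N e1 e2 : ℤ} (h : Pair N e1 e2) : (pA h)⁻¹ = pA h :=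
  inv_eq_of_mul_eq_one_right (pA_sq h)

open List Equiv Function

theorem fA_eval_up' {N e1 e2 x : ℤ} (hx : x % N = e1) : fA N e1 e2 x = x + 1 := fA_eval_up hx

theorem braid {N e1 e2 e3 : ℤ} (h12 : Pair N e1 e2) (h23 : Pair N e2 e3)
    (h13 : e1 ≠ e3) : (pA h12 * pA h23) ^ 3 = 1 := by
  ext x
  simp only [pow_succ, pow_zero, one_mul, Perm.mul_apply, Perm.one_apply, pA_apply]
  by_cases hx1 : x % N = e1
  · have r2 : (x + 1) % N = e2 := h12.up x hx1
    have r3 : (x + 1 + 1) % N = e3 := h23.up _ r2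
    have r4 : (x + 1 + 1 - 1) % N = e2 := h23.down _ r3
    rw [fA_eval_other hx1 h12.ne h13, fA_eval_up hx1, fA_eval_up r2,
      fA_eval_other r3 (Ne.symm h13) (Ne.symm h23.ne), fA_eval_down r3 (Ne.symm h23.ne),
      fA_eval_down r4 (Ne.symm h12.ne)]
    ring
  · by_cases hx2 : x % N = e2
    · have r3 : (x + 1) % N = e3 := h23.up x hx2
      have r2 : (x + 1 - 1) % N = e2 := h23.down _ r3
      have r1 : (x + 1 - 1 - 1) % N = e1 := h12.down _ r2
      rw [fA_eval_up hx2, fA_eval_other r3 (Ne.symm h13) (Ne.symm h23.ne),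
        fA_eval_down r3 (Ne.symm h23.ne), fA_eval_down r2 (Ne.symm h12.ne),
        fA_eval_other r1 h12.ne h13, fA_eval_up r1]
      ring
    · by_cases hx3 : x % N = e3
      · have r2 : (x - 1) % N = e2 := h23.down x hx3
        have r1 : (x - 1 - 1) % N = e1 := h12.down _ r2
        have r2' : (x - 1 - 1 + 1) % N = e2 := h12.up _ r1
        have r3' : (x - 1 - 1 + 1 + 1) % N = e3 := h23.up _ r2'
        rw [fA_eval_down hx3 (Ne.symm h23.ne), fA_eval_down r2 (Ne.symm h12.ne),
          fA_eval_other r1 h12.ne h13, fA_eval_up r1, fA_eval_up r2',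
          fA_eval_other r3' (Ne.symm h13) (Ne.symm h23.ne)]
        ring
      · simp only [fA_eval_other rfl hx2 hx3, fA_eval_other rfl hx1 hx2]

theorem comm_mul {N e1 e2 g1 g2 : ℤ} (h : Pair N e1 e2) (h' : Pair N g1 g2)
    (d11 : e1 ≠ g1) (d12 : e1 ≠ g2) (d21 : e2 ≠ g1) (d22 : e2 ≠ g2) :
    pA h * pA h' = pA h' * pA h := by
  ext x
  simp only [Perm.mul_apply, pA_apply]
  by_cases hx1 : x % N = e1
  · have r2 : (x + 1) % N = e2 := h.up x hx1
    rw [fA_eval_other hx1 d11 d12, fA_eval_up hx1, fA_eval_other r2 d21 d22]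
  · by_cases hx2 : x % N = e2
    · have r1 : (x - 1) % N = e1 := h.down x hx2
      rw [fA_eval_other hx2 d21 d22, fA_eval_down hx2 (Ne.symm h.ne),
        fA_eval_other r1 d11 d12]
    · by_cases hy1 : x % N = g1
      · have r2 : (x + 1) % N = g2 := h'.up x hy1
        rw [fA_eval_up hy1, fA_eval_other r2 (Ne.symm d12) (Ne.symm d22),
          fA_eval_other hy1 (Ne.symm d11) (Ne.symm d21), fA_eval_up hy1]
      · by_cases hy2 : x % N = g2
        · have r1 : (x - 1) % N = g1 := h'.down x hy2
          rw [fA_eval_down hy2 (Ne.symm h'.ne), fA_eval_other r1 (Ne.symm d11) (Ne.symm d21),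
            fA_eval_other hy2 (Ne.symm d12) (Ne.symm d22), fA_eval_down hy2 (Ne.symm h'.ne)]
        · simp only [fA_eval_other rfl hx1 hx2, fA_eval_other rfl hy1 hy2]

theorem comm_sq {N e1 e2 g1 g2 : ℤ} (h : Pair N e1 e2) (h' : Pair N g1 g2)
    (d11 : e1 ≠ g1) (d12 : e1 ≠ g2) (d21 : e2 ≠ g1) (d22 : e2 ≠ g2) :
    (pA h * pA h') ^ 2 = 1 := by
  have hc := comm_mul h h' d11 d12 d21 d22
  calc (pA h * pA h') ^ 2 = pA h * (pA h' * pA h) * pA h' := by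
        rw [sq]; group
    _ = pA h * (pA h * pA h') * pA h' := by rw [hc]
    _ = (pA h * pA h) * (pA h' * pA h') := by group
    _ = 1 := by rw [pA_sq, pA_sq, one_mul]

theorem pair_of_cases {N e1 e2 : ℤ} (hN : 2 ≤ N) (h0 : 0 ≤ e1)
    (hc : (e1 + 1 = N ∧ e2 = 0) ∨ (e1 + 1 < N ∧ e2 = e1 + 1)) : Pair N e1 e2 where
  up x hx := by
    obtain ⟨q, hq⟩ := emod_extract N x
    rw [hx] at hq
    rcases hc with ⟨h1, h2⟩ | ⟨h1, h2⟩
    · exact emod_helper (q + 1) (by linear_combination hq + h1 - h2) (by omega) (by omega)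
    · exact emod_helper q (by linear_combination hq - h2) (by omega) (by omega)
  down x hx := by
    obtain ⟨q, hq⟩ := emod_extract N x
    rw [hx] at hq
    rcases hc with ⟨h1, h2⟩ | ⟨h1, h2⟩
    · exact emod_helper (q - 1) (by linear_combination hq - h1 + h2) (by omega) (by omega)
    · exact emod_helper q (by linear_combination hq + h2) (by omega) (by omega)
  ne := by omega

section FinPart
open List Equiv Function

variable (n : ℕ)

/-- Integer value of a `Fin (n+1)` index. -/
def E (i : Fin (n + 1)) : ℤ := (i.val : ℤ)

theorem E_nonneg (i : Fin (n + 1)) : 0 ≤ E n i := Int.ofNat_nonneg _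

theorem E_lt (i : Fin (n + 1)) : E n i < (n : ℤ) + 1 := by
  have := i.isLt; unfold E; omega

theorem E_inj {i j : Fin (n + 1)} (h : E n i = E n j) : i = j := by
  unfold E at h
  have : i.val = j.val := by exact_mod_cast h
  exact Fin.ext this

theorem E_cases (i : Fin (n + 1)) :
    (E n i + 1 = (n : ℤ) + 1 ∧ E n (i + 1) = 0) ∨
      (E n i + 1 < (n : ℤ) + 1 ∧ E n (i + 1) = E n i + 1) := by
  have h := Fin.val_add_one i
  by_cases hi : i = Fin.last n
  · left
    rw [if_pos hi] at h
    subst hi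
    unfold E
    rw [h]
    simp [Fin.val_last]
  · right
    rw [if_neg hi] at h
    have hlt : i.val < n := Fin.val_lt_last hi
    unfold E
    omega

theorem pairE (hn : 2 ≤ n) (i : Fin (n + 1)) : Pair ((n : ℤ) + 1) (E n i) (E n (i + 1)) :=
  pair_of_cases (by omega) (E_nonneg n i) (E_cases n i)

/-- The simple reflections as permutations of `ℤ`. -/
def sig (hn : 2 ≤ n) (i : Fin (n + 1)) : Equiv.Perm ℤ := pA (pairE n hn i)

theorem sig_apply (hn : 2 ≤ n) (i : Fin (n + 1)) (x : ℤ) :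
    sig n hn i x = fA ((n : ℤ) + 1) (E n i) (E n (i + 1)) x := rfl

theorem sig_sq (hn : 2 ≤ n) (i : Fin (n + 1)) : sig n hn i * sig n hn i = 1 := pA_sq _

theorem E_ne_13 (hn : 2 ≤ n) (i : Fin (n + 1)) : E n i ≠ E n (i + 1 + 1) := by
  have h1 := E_cases n i
  have h2 := E_cases n (i + 1)
  have b0 := E_nonneg n i
  have b1 := E_lt n i
  have b2 := E_nonneg n (i + 1)
  have b3 := E_lt n (i + 1)
  have hn' : (2 : ℤ) ≤ (n : ℤ) := by exact_mod_cast hn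
  omega

theorem sig_braid (hn : 2 ≤ n) (i : Fin (n + 1)) : (sig n hn i * sig n hn (i + 1)) ^ 3 = 1 :=
  braid (pairE n hn i) (pairE n hn (i + 1)) (E_ne_13 n hn i)

theorem sig_liftable (hn : 2 ≤ n) (M : CoxeterMatrix (Fin (n + 1)))
    (hM : ∀ i j : Fin (n + 1),
      M i j = if i = j then 1 else if j = i + 1 ∨ i = j + 1 then 3 else 2) :
    M.IsLiftable (sig n hn) := by
  intro i j
  rw [hM i j]
  split_ifs with h1 h2
  · subst h1
    rw [pow_one]
    exact sig_sq n hn i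
  · rcases h2 with h2 | h2
    · subst h2
      exact sig_braid n hn i
    · subst h2
      have hb := sig_braid n hn j
      have hinv : ∀ i : Fin (n + 1), (sig n hn i)⁻¹ = sig n hn i := fun i => pA_inv _
      have : sig n hn (j + 1) * sig n hn j = (sig n hn j * sig n hn (j + 1))⁻¹ := by
        rw [mul_inv_rev, hinv, hinv]
      rw [this, inv_pow, hb, inv_one]
  · push_neg at h2
    refine comm_sq (pairE n hn i) (pairE n hn j) ?_ ?_ ?_ ?_
    · exact fun h => h1 (E_inj n h)
    · exact fun h => h2.2 (E_inj n h)
    · exact fun h => h2.1 (E_inj n h).symm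
    · exact fun h => h1 (by have := E_inj n h; exact add_right_cancel this)

end FinPart
section WordPart
open List Equiv Function

variable (n : ℕ) (hn : 2 ≤ n)

theorem sig_move (i : Fin (n + 1)) (x : ℤ) : |sig n hn i x - x| ≤ 1 := by
  rw [sig_apply, abs_le]
  rcases fA_move ((n : ℤ) + 1) (E n i) (E n (i + 1)) x with h | h | h <;> rw [h] <;>
    constructor <;> omega

theorem prod_move : ∀ (ω : List (Fin (n + 1))) (x : ℤ),
    |((ω.map (sig n hn)).prod) x - x| ≤ (ω.length : ℤ) := by
  intro ω
  induction ω with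
  | nil => intro x; simp
  | cons i t ih =>
    intro x
    simp only [List.map_cons, List.prod_cons, List.length_cons, Equiv.Perm.mul_apply]
    calc |sig n hn i (((t.map (sig n hn)).prod) x) - x|
        ≤ |sig n hn i (((t.map (sig n hn)).prod) x) - ((t.map (sig n hn)).prod) x| +
            |((t.map (sig n hn)).prod) x - x| := abs_sub_le _ _ _
      _ ≤ 1 + (t.length : ℤ) := add_le_add (sig_move n hn i _) (ih x)
      _ = ((t.length + 1 : ℕ) : ℤ) := by push_cast; ring

theorem chunk : ∀ m : ℕ, m ≤ n + 1 → ∀ x : ℤ, x % ((n : ℤ) + 1) = 0 →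
    (((List.range' (n + 1 - m) m).map
      (sig n hn ∘ (Nat.cast : ℕ → Fin (n + 1)))).prod) x = x - m := by
  intro m
  induction m with
  | zero => intro _ x _; simp
  | succ m ih =>
    intro hm x hx
    have hrw : List.range' (n + 1 - (m + 1)) (m + 1) =
        (n + 1 - (m + 1)) :: List.range' (n + 1 - m) m := by
      have hs : n + 1 - (m + 1) + 1 = n + 1 - m := by omega
      rw [List.range'_succ, hs]
    rw [hrw, List.map_cons, List.prod_cons, Equiv.Perm.mul_apply, ih (by omega) x hx]
    have hidx : n + 1 - (m + 1) = n - m := by omega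
    rw [hidx]
    simp only [Function.comp_apply]
    obtain ⟨q, hq⟩ := emod_extract ((n : ℤ) + 1) x
    rw [hx, add_zero] at hq
    have hjval : E n ((n - m : ℕ) : Fin (n + 1)) = (n : ℤ) - m := by
      unfold E
      rw [Fin.val_natCast, Nat.mod_eq_of_lt (by omega)]
      omega
    have hc := E_cases n ((n - m : ℕ) : Fin (n + 1))
    have b2 := E_nonneg n (((n - m : ℕ) : Fin (n + 1)) + 1)
    have b3 := E_lt n (((n - m : ℕ) : Fin (n + 1)) + 1)
    rw [sig_apply]
    rcases hc with ⟨h1, h2⟩ | ⟨h1, h2⟩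
    · have hm0 : (m : ℤ) = 0 := by omega
      rw [fA_eval_down (show (x - (m : ℤ)) % ((n : ℤ) + 1) = E n (((n - m : ℕ) : Fin (n + 1)) + 1)
          from emod_helper q (by linear_combination hq - hm0 - h2) (by omega) (by omega))
        (by omega)]
      push_cast
      ring
    · rw [fA_eval_down (show (x - (m : ℤ)) % ((n : ℤ) + 1) = E n (((n - m : ℕ) : Fin (n + 1)) + 1)
          from emod_helper (q - 1) (by linear_combination hq - hjval - h2) (by omega) (by omega))
        (by omega)]
      push_cast
      ring

theorem fullmove (x : ℤ) (hx : x % ((n : ℤ) + 1) = 0) :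
    (((List.range (n + 1)).map
      (sig n hn ∘ (Nat.cast : ℕ → Fin (n + 1)))).prod) x = x - ((n : ℤ) + 1) := by
  have h := chunk n hn (n + 1) le_rfl x hx
  rw [Nat.sub_self, ← List.range_eq_range'] at h
  rw [h]
  push_cast
  ring

end WordPart

end AffineAAux
open AffineAAux in
/-- In the Coxeter group of affine type `Ã_n` (`n ≥ 2`), with generators `s₀, …, s_n` and
Coxeter matrix entries `1` on the diagonal, `3` for cyclically adjacent indices and `2`
otherwise, the element `(s₀ s₁ ⋯ s_n)^k` has length `k(n+1)`; in particular every prefix of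
the infinite word `s₀ s₁ ⋯ s_n s₀ s₁ ⋯ s_n ⋯` is reduced. -/
theorem affineA_coxeter_element_pow_length (n : ℕ) (hn : 2 ≤ n)
    {W : Type*} [Group W] (M : CoxeterMatrix (Fin (n + 1)))
    (hM : ∀ i j : Fin (n + 1),
      M i j = if i = j then 1 else if j = i + 1 ∨ i = j + 1 then 3 else 2)
    (cs : CoxeterSystem M W) :
    (∀ k : ℕ,
      cs.length ((cs.wordProd ((List.range (n + 1)).map (Nat.cast : ℕ → Fin (n + 1)))) ^ k) =
        k * (n + 1)) ∧
    (∀ m : ℕ, cs.IsReduced ((List.range m).map (Nat.cast : ℕ → Fin (n + 1)))) := by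
  have hlift : M.IsLiftable (sig n hn) := sig_liftable n hn M hM
  set φ : W →* Equiv.Perm ℤ := cs.lift ⟨sig n hn, hlift⟩ with hφdef
  have hφ : ∀ i, φ (cs.simple i) = sig n hn i := fun i => cs.lift_apply_simple hlift i
  have φword : ∀ ω : List (Fin (n + 1)),
      φ (cs.wordProd ω) = (ω.map (sig n hn)).prod := by
    intro ω
    rw [CoxeterSystem.wordProd, map_list_prod, List.map_map]
    congr 1
    exact List.map_congr_left fun i _ => hφ i
  have lower : ∀ (w : W) (x : ℤ), |φ w x - x| ≤ (cs.length w : ℤ) := by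
    intro w x
    obtain ⟨ω, hl, rfl⟩ := cs.exists_reduced_word w
    rw [φword, hl.eq]
    exact prod_move n hn ω x
  have hφc : ∀ x : ℤ, x % ((n : ℤ) + 1) = 0 →
      φ (cs.wordProd ((List.range (n + 1)).map (Nat.cast : ℕ → Fin (n + 1)))) x
        = x - ((n : ℤ) + 1) := by
    intro x hx
    rw [φword, List.map_map]
    exact fullmove n hn x hx
  have hφck : ∀ (k : ℕ) (x : ℤ), x % ((n : ℤ) + 1) = 0 →
      φ ((cs.wordProd ((List.range (n + 1)).map (Nat.cast : ℕ → Fin (n + 1)))) ^ k) x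
        = x - k * ((n : ℤ) + 1) := by
    intro k
    induction k with
    | zero => intro x hx; simp
    | succ k ih =>
      intro x hx
      rw [pow_succ, map_mul, Equiv.Perm.mul_apply, hφc x hx]
      obtain ⟨q, hq⟩ := emod_extract ((n : ℤ) + 1) x
      rw [hx, add_zero] at hq
      have hx' : (x - ((n : ℤ) + 1)) % ((n : ℤ) + 1) = 0 :=
        emod_helper (q - 1) (by linear_combination hq) le_rfl (by omega)
      rw [ih _ hx']
      push_cast
      ring
  have hlen_word : ((List.range (n + 1)).map (Nat.cast : ℕ → Fin (n + 1))).length = n + 1 := by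
    simp
  have upper : ∀ k : ℕ,
      cs.length ((cs.wordProd ((List.range (n + 1)).map (Nat.cast : ℕ → Fin (n + 1)))) ^ k)
        ≤ k * (n + 1) := by
    intro k
    induction k with
    | zero => simp
    | succ k ih =>
      rw [pow_succ]
      have h1 := cs.length_mul_le
        ((cs.wordProd ((List.range (n + 1)).map (Nat.cast : ℕ → Fin (n + 1)))) ^ k)
        (cs.wordProd ((List.range (n + 1)).map (Nat.cast : ℕ → Fin (n + 1))))
      have h2 := cs.length_wordProd_le ((List.range (n + 1)).map (Nat.cast : ℕ → Fin (n + 1)))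
      rw [hlen_word] at h2
      have : (k + 1) * (n + 1) = k * (n + 1) + (n + 1) := by ring
      omega
  have part1 : ∀ k : ℕ,
      cs.length ((cs.wordProd ((List.range (n + 1)).map (Nat.cast : ℕ → Fin (n + 1)))) ^ k)
        = k * (n + 1) := by
    intro k
    have hlo := lower
      ((cs.wordProd ((List.range (n + 1)).map (Nat.cast : ℕ → Fin (n + 1)))) ^ k) 0
    rw [hφck k 0 (by simp)] at hlo
    have habs : |(0 : ℤ) - (k : ℤ) * ((n : ℤ) + 1) - 0| = ((k * (n + 1) : ℕ) : ℤ) := by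
      have h1 : (0 : ℤ) - (k : ℤ) * ((n : ℤ) + 1) - 0 = -((k : ℤ) * ((n : ℤ) + 1)) := by ring
      rw [h1, abs_neg, abs_of_nonneg (by positivity)]
      push_cast
      ring
    rw [habs] at hlo
    exact le_antisymm (upper k) (by exact_mod_cast hlo)
  have cpow : ∀ k : ℕ,
      cs.wordProd ((List.range (k * (n + 1))).map (Nat.cast : ℕ → Fin (n + 1)))
        = (cs.wordProd ((List.range (n + 1)).map (Nat.cast : ℕ → Fin (n + 1)))) ^ k := by
    intro k
    induction k with
    | zero => simp [CoxeterSystem.wordProd]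
    | succ k ih =>
      have hm : (k + 1) * (n + 1) = k * (n + 1) + (n + 1) := by ring
      rw [hm, List.range_add, List.map_append, cs.wordProd_append, ih, List.map_map]
      have hcast : ((List.range (n + 1)).map
          ((Nat.cast : ℕ → Fin (n + 1)) ∘ (k * (n + 1) + ·)))
          = (List.range (n + 1)).map (Nat.cast : ℕ → Fin (n + 1)) := by
        refine List.map_congr_left fun t _ => ?_
        show ((k * (n + 1) + t : ℕ) : Fin (n + 1)) = (t : Fin (n + 1))
        exact Fin.ext (by simp only [Fin.val_natCast]; rw [Nat.add_comm, Nat.add_mul_mod_self_right])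
      rw [hcast, pow_succ]
  have part2 : ∀ m : ℕ, cs.IsReduced ((List.range m).map (Nat.cast : ℕ → Fin (n + 1))) := by
    intro m
    unfold CoxeterSystem.IsReduced
    have hup := cs.length_wordProd_le ((List.range m).map (Nat.cast : ℕ → Fin (n + 1)))
    have hlen : ((List.range m).map (Nat.cast : ℕ → Fin (n + 1))).length = m := by simp
    rw [hlen] at hup ⊢
    have hle : m ≤ m * (n + 1) := Nat.le_mul_of_pos_right m (by omega)
    have hsplit : m + (m * (n + 1) - m) = m * (n + 1) := by omega
    have hdecomp :
        (cs.wordProd ((List.range (n + 1)).map (Nat.cast : ℕ → Fin (n + 1)))) ^ m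
          = cs.wordProd ((List.range m).map (Nat.cast : ℕ → Fin (n + 1))) *
            cs.wordProd (((List.range (m * (n + 1) - m)).map (m + ·)).map
              (Nat.cast : ℕ → Fin (n + 1))) := by
      rw [← cs.wordProd_append, ← List.map_append, ← List.range_add, hsplit]
      exact (cpow m).symm
    have hlow := cs.length_mul_le
      (cs.wordProd ((List.range m).map (Nat.cast : ℕ → Fin (n + 1))))
      (cs.wordProd (((List.range (m * (n + 1) - m)).map (m + ·)).map
        (Nat.cast : ℕ → Fin (n + 1))))
    rw [← hdecomp, part1 m] at hlow
    have htail := cs.length_wordProd_le (((List.range (m * (n + 1) - m)).map (m + ·)).map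
      (Nat.cast : ℕ → Fin (n + 1)))
    have htlen : ((((List.range (m * (n + 1) - m)).map (m + ·)).map
      (Nat.cast : ℕ → Fin (n + 1)))).length = m * (n + 1) - m := by simp
    rw [htlen] at htail
    omega
  exact ⟨part1, part2⟩
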